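/- Guard-preserving extension: let C = S₁ ∩ S₂ with S₂ \ S₁ infinite, let σ be a substitution into S₁ and σ̄ a substitution into S₂ with σ ⋈_C σ̄, and let g be a guard with constants in C and variables contained in dom(σ) ∪ V for some finite set V of variables disjoint from dom(σ). If there exists γ : V → S₁ with (σ ⊎ γ) ⊨ g, then there exists γ̄ : V → S₂ with (σ̄ ⊎ γ̄) ⊨ g and (σ ⊎ γ) ⋈_C (σ̄ ⊎ γ̄). -/

import Mathlib

noncomputable section
open Classical

/-- A substitution: a partial map from variables to letters. -/
def dom {X A : Type*} (σ : X → Option A) : Set X := {x | σ x ≠ none}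

def codom {X A : Type*} (σ : X → Option A) : Set A := {a | ∃ x, σ x = some a}

/-- C-coherence of two substitutions with equal domains. -/
def Coh {X A : Type*} (C : Set A) (σ' σ : X → Option A) : Prop :=
  dom σ' = dom σ ∧
  (∀ x a b, σ' x = some a → σ x = some b →
      (a ∈ C ↔ b ∈ C) ∧ ((a ∈ C ∨ b ∈ C) → a = b)) ∧
  (∀ x y a b a' b', σ' x = some a → σ' y = some b →
      σ x = some a' → σ y = some b' → (a = b ↔ a' = b'))

/-- Union of two substitutions (intended for disjoint domains). -/
def union {X A : Type*} (σ γ : X → Option A) : X → Option A :=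
  fun x => match σ x with | some a => some a | none => γ x

/-- Restriction of a substitution to a set of variables. -/
def restrict {X A : Type*} (σ : X → Option A) (D : Set X) : X → Option A :=
  fun x => if x ∈ D then σ x else none

/-- The singleton substitution {x ↦ a}. -/
def single {X A : Type*} (x : X) (a : A) : X → Option A :=
  fun z => if z = x then some a else none

/-- Atomic guard: (a = x) with a a constant, or (x = y) between variables. -/
inductive Atom (X A : Type*) where
  | const : A → X → Atom X A
  | eq : X → X → Atom X A

/-- A guard is a finite conjunction (list) of atoms. -/
abbrev Guard (X A : Type*) := List (Atom X A)

def atomVars {X A : Type*} : Atom X A → Set X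
  | Atom.const _ x => {x}
  | Atom.eq x y => {x, y}

def atomConsts {X A : Type*} : Atom X A → Set A
  | Atom.const a _ => {a}
  | Atom.eq _ _ => ∅

/-- The variables occurring in a guard. -/
def gvars {X A : Type*} (g : Guard X A) : Set X := {x | ∃ t ∈ g, x ∈ atomVars t}

/-- The constants occurring in a guard. -/
def gconsts {X A : Type*} (g : Guard X A) : Set A := {a | ∃ t ∈ g, a ∈ atomConsts t}

/-- A (partial) substitution satisfies a guard if every atom holds (all values defined). -/
def sat {X A : Type*} (σ : X → Option A) (g : Guard X A) : Prop :=
  ∀ t ∈ g, match t with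
    | Atom.const a x => σ x = some a
    | Atom.eq x y => σ x ≠ none ∧ σ x = σ y


lemma union_eq_some_left {X A : Type*} {σ γ : X → Option A} {x : X} {a : A}
    (h : σ x = some a) : union σ γ x = some a := by simp [union, h]

lemma union_eq_right {X A : Type*} {σ γ : X → Option A} {x : X}
    (h : σ x = none) : union σ γ x = γ x := by simp [union, h]

lemma union_cases {X A : Type*} (σ γ : X → Option A) (x : X) :
    (∃ a, σ x = some a ∧ union σ γ x = some a) ∨ (σ x = none ∧ union σ γ x = γ x) := by
  cases h : σ x with
  | none => exact Or.inr ⟨rfl, union_eq_right h⟩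
  | some a => exact Or.inl ⟨a, rfl, union_eq_some_left h⟩

lemma codom_finite {X A : Type*} {σ : X → Option A} (h : (dom σ).Finite) :
    (codom σ).Finite := by
  have h1 : (σ '' dom σ).Finite := h.image σ
  have h2 : codom σ ⊆ Option.some ⁻¹' (σ '' dom σ) := by
    rintro a ⟨x, hx⟩
    exact ⟨x, by simp [dom, hx], hx⟩
  exact (h1.preimage ((Option.some_injective A).injOn)).subset h2

/-- Guard-preserving extension. -/
theorem stmt_14 {X A : Type*} (S₁ S₂ : Set A) (C : Set A) (hC : C = S₁ ∩ S₂)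
    (hinf : (S₂ \ S₁).Infinite)
    (σ σ' : X → Option A)
    (hσ : codom σ ⊆ S₁) (hσ' : codom σ' ⊆ S₂)
    (hfin : (dom σ).Finite)
    (hcoh : Coh C σ σ')
    (g : Guard X A) (hc : gconsts g ⊆ C)
    (V : Set X) (hV : V.Finite) (hVdisj : V ∩ dom σ = ∅)
    (hv : gvars g ⊆ dom σ ∪ V)
    (γ : X → Option A) (hγdom : dom γ = V) (hγcod : codom γ ⊆ S₁)
    (hsat : sat (union σ γ) g) :
    ∃ γ' : X → Option A, dom γ' = V ∧ codom γ' ⊆ S₂ ∧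
      sat (union σ' γ') g ∧ Coh C (union σ γ) (union σ' γ') := by
  classical
  obtain ⟨hdom, hCmem, hpat⟩ := hcoh
  have hdomσ' : ∀ x a, σ x = some a → ∃ b, σ' x = some b := by
    intro x a hx
    have hx' : x ∈ dom σ' := by rw [← hdom]; simp [dom, hx]
    simpa [dom, Option.ne_none_iff_exists'] using hx'
  have hfinσ' : (dom σ').Finite := hdom ▸ hfin
  have hT : ((S₂ \ S₁) \ codom σ').Infinite := hinf.diff (codom_finite hfinσ')
  have hDfin : (codom γ).Finite := codom_finite (hγdom ▸ hV)
  obtain ⟨e⟩ : Nonempty (codom γ ↪ (((S₂ \ S₁) \ codom σ' : Set A))) := by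
    haveI := hDfin.fintype
    haveI : Infinite (((S₂ \ S₁) \ codom σ' : Set A)) := hT.to_subtype
    exact ⟨((Fintype.equivFin _).toEmbedding.trans Fin.valEmbedding).trans
      (Infinite.natEmbedding _)⟩
  set f : A → A := fun a =>
    if a ∈ C then a
    else if h : a ∈ codom σ then (σ' h.choose).getD a
    else if hd : a ∈ codom γ then (e ⟨a, hd⟩ : A)
    else a with hf
  have hfC : ∀ a, a ∈ C → f a = a := by intro a ha; rw [hf]; simp [ha]
  have hmap : ∀ x a, σ x = some a → σ' x = some (f a) := by
    intro x a hx
    obtain ⟨b, hb⟩ := hdomσ' x a hx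
    by_cases haC : a ∈ C
    · have hab := (hCmem x a b hx hb).2 (Or.inl haC)
      rw [hb, hfC a haC, hab]
    · have hcod : a ∈ codom σ := ⟨x, hx⟩
      have hx₀ : σ hcod.choose = some a := hcod.choose_spec
      obtain ⟨b₀, hb₀⟩ := hdomσ' _ a hx₀
      have hbb : b = b₀ := (hpat x hcod.choose a a b b₀ hx hx₀ hb hb₀).1 rfl
      rw [hb, hf]
      simp only [if_neg haC, dif_pos hcod, hb₀, Option.getD_some, hbb]
  have hfreshT : ∀ a (ha : a ∉ C) (hb : a ∉ codom σ) (hc : a ∈ codom γ),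
      f a = (e ⟨a, hc⟩ : A) := by
    intro a ha hb hc; rw [hf]; simp only [if_neg ha, dif_neg hb, dif_pos hc]
  have hclass : ∀ a, a ∈ codom σ ∪ codom γ →
      (a ∈ C ∧ f a = a) ∨
      (a ∉ C ∧ f a ∉ C ∧ f a ∈ codom σ' ∧ ∃ x, σ x = some a ∧ σ' x = some (f a)) ∨
      (a ∉ C ∧ a ∉ codom σ ∧ f a ∈ (S₂ \ S₁) \ codom σ') := by
    intro a ha
    by_cases haC : a ∈ C
    · exact Or.inl ⟨haC, hfC a haC⟩
    by_cases haσ : a ∈ codom σ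
    · obtain ⟨x, hx⟩ := haσ
      have h5 := hmap x a hx
      refine Or.inr (Or.inl ⟨haC, ?_, ⟨x, h5⟩, x, hx, h5⟩)
      intro hfC'
      exact haC ((hCmem x a (f a) hx h5).1.mpr hfC')
    · have haγ : a ∈ codom γ := by
        rcases ha with h | h
        · exact absurd h haσ
        · exact h
      refine Or.inr (Or.inr ⟨haC, haσ, ?_⟩)
      rw [hfreshT a haC haσ haγ]
      exact (e ⟨a, haγ⟩).2
  have hCS₁ : C ⊆ S₁ := by rw [hC]; exact Set.inter_subset_left
  have hCS₂ : C ⊆ S₂ := by rw [hC]; exact Set.inter_subset_right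
  have finj : ∀ a b, a ∈ codom σ ∪ codom γ → b ∈ codom σ ∪ codom γ → f a = f b → a = b := by
    intro a b ha hb hab
    rcases hclass a ha with ⟨haC, hfa⟩ | ⟨haC, hfaC, hfaσ', x, hx, hx'⟩ | ⟨haC, haσ, hfaT⟩ <;>
      rcases hclass b hb with ⟨hbC, hfb⟩ | ⟨hbC, hfbC, hfbσ', y, hy, hy'⟩ | ⟨hbC, hbσ, hfbT⟩
    · rw [← hfa, hab, hfb]
    · exact absurd (show f b ∈ C by rw [← hab, hfa]; exact haC) hfbC
    · exact absurd (hCS₁ (show f b ∈ C by rw [← hab, hfa]; exact haC)) hfbT.1.2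
    · exact absurd (show f a ∈ C by rw [hab, hfb]; exact hbC) hfaC
    · exact (hpat x y a b (f a) (f b) hx hy hx' hy').2 hab
    · exact absurd (show f b ∈ codom σ' by rw [← hab]; exact hfaσ') hfbT.2
    · exact absurd (hCS₁ (show f a ∈ C by rw [hab, hfb]; exact hbC)) hfaT.1.2
    · exact absurd (show f a ∈ codom σ' by rw [hab]; exact hfbσ') hfaT.2
    · have haγ : a ∈ codom γ := by
        rcases ha with h | h
        · exact absurd h haσ
        · exact h
      have hbγ : b ∈ codom γ := by
        rcases hb with h | h
        · exact absurd h hbσ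
        · exact h
      have : (e ⟨a, haγ⟩ : A) = (e ⟨b, hbγ⟩ : A) := by
        rw [← hfreshT a haC haσ haγ, ← hfreshT b hbC hbσ hbγ, hab]
      have := e.injective (Subtype.coe_injective this)
      exact congrArg Subtype.val this
  have hfS₂ : ∀ a, a ∈ codom σ ∪ codom γ → f a ∈ S₂ := by
    intro a ha
    rcases hclass a ha with ⟨haC, hfa⟩ | ⟨_, _, hfaσ', _⟩ | ⟨_, _, hfaT⟩
    · rw [hfa]; exact hCS₂ haC
    · exact hσ' hfaσ'
    · exact hfaT.1.1
  set γ' : X → Option A := fun x => (γ x).map f with hγ'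
  have hτ : ∀ x, union σ' γ' x = (union σ γ x).map f := by
    intro x
    rcases union_cases σ γ x with ⟨a, hxa, hu⟩ | ⟨hxn, hu⟩
    · rw [hu, union_eq_some_left (hmap x a hxa), Option.map_some]
    · have hσ'n : σ' x = none := by
        by_contra h
        have hx' : x ∈ dom σ' := h
        rw [← hdom] at hx'
        exact hx' hxn
      rw [hu, union_eq_right hσ'n]
  have hE : ∀ x a, union σ γ x = some a → a ∈ codom σ ∪ codom γ := by
    intro x a hx
    rcases union_cases σ γ x with ⟨b, hxb, hu⟩ | ⟨hxn, hu⟩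
    · rw [hu] at hx
      exact Or.inl ⟨x, hxb.trans hx⟩
    · rw [hu] at hx
      exact Or.inr ⟨x, hx⟩
  refine ⟨γ', ?_, ?_, ?_, ?_⟩
  · rw [← hγdom]
    ext x
    simp [dom, hγ', Option.map_eq_none_iff]
  · rintro a ⟨x, hx⟩
    simp only [hγ', Option.map_eq_some_iff] at hx
    obtain ⟨b, hb, hba⟩ := hx
    exact hba ▸ hfS₂ b (Or.inr ⟨x, hb⟩)
  · intro t ht
    have hs := hsat t ht
    cases t with
    | const c x =>
      have hcC : c ∈ C := hc ⟨Atom.const c x, ht, rfl⟩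
      simp only at hs ⊢
      rw [hτ, hs, Option.map_some, hfC c hcC]
    | eq x y =>
      obtain ⟨h1, h2⟩ := hs
      refine ⟨?_, by rw [hτ, hτ, h2]⟩
      rw [hτ]
      exact fun h => h1 (Option.map_eq_none_iff.mp h)
  · refine ⟨?_, ?_, ?_⟩
    · ext x
      show union σ γ x ≠ none ↔ union σ' γ' x ≠ none
      rw [hτ]
      simp [Option.map_eq_none_iff]
    · intro x a b hxa hxb
      have hb : b = f a := by
        rw [hτ, hxa, Option.map_some] at hxb
        exact (Option.some.inj hxb).symm
      subst hb
      rcases hclass a (hE x a hxa) with ⟨haC, hfa⟩ | ⟨haC, hfaC, _, _⟩ | ⟨haC, _, hfaT⟩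
      · exact ⟨by rw [hfa], fun _ => hfa.symm⟩
      · exact ⟨⟨fun h => absurd h haC, fun h => absurd h hfaC⟩,
          fun h => absurd h (by rintro (h | h); exacts [haC h, hfaC h])⟩
      · have hfaC : f a ∉ C := fun h => hfaT.1.2 (hCS₁ h)
        exact ⟨⟨fun h => absurd h haC, fun h => absurd h hfaC⟩,
          fun h => absurd h (by rintro (h | h); exacts [haC h, hfaC h])⟩
    · intro x y a b a' b' hxa hyb hxa' hyb'
      have ha' : a' = f a := by
        rw [hτ, hxa, Option.map_some] at hxa'
        exact (Option.some.inj hxa').symm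
      have hb' : b' = f b := by
        rw [hτ, hyb, Option.map_some] at hyb'
        exact (Option.some.inj hyb').symm
      subst ha'; subst hb'
      exact ⟨fun h => by rw [h], fun h => finj a b (hE x a hxa) (hE y b hyb) h⟩
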